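/- Let G be a graph with minimum degree δ(G) ≥ 1 and let S ⊆ V(G) be such that every vertex is dominated by S (|N_S[v]| ≥ 1 for all v) and every pair of distinct vertices u, v satisfies min(|N_S[u] − N_S[v]|, |N_S[v] − N_S[u]|) ≥ 1. Then S is 2-dominating: |N_S[v]| ≥ 2 for every vertex v. -/

import Mathlib

def closedNbhd {V : Type*} (G : SimpleGraph V) (v : V) : Set V :=
  insert v (G.neighborSet v)

theorem stmt_5 {V : Type*} [Fintype V] (G : SimpleGraph V) [DecidableRel G.Adj]
    (S : Set V)
    (hdeg : ∀ v : V, 1 ≤ G.degree v)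
    (hdom : ∀ v : V, 1 ≤ (closedNbhd G v ∩ S).ncard)
    (hdist : ∀ u v : V, u ≠ v →
      1 ≤ min ((closedNbhd G u ∩ S) \ (closedNbhd G v ∩ S)).ncard
            ((closedNbhd G v ∩ S) \ (closedNbhd G u ∩ S)).ncard) :
    ∀ v : V, 2 ≤ (closedNbhd G v ∩ S).ncard := by
  intro v
  by_contra hlt
  push_neg at hlt
  have h1 : (closedNbhd G v ∩ S).ncard = 1 := le_antisymm (by omega) (hdom v)
  obtain ⟨w, hw⟩ := Set.ncard_eq_one.mp h1
  have hwmem : w ∈ closedNbhd G v ∩ S := hw ▸ rfl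
  obtain ⟨hwc, hwS⟩ := hwmem
  -- find the witness u to contradict hdist
  obtain ⟨u, huS, hune⟩ :
      ∃ u, w ∈ closedNbhd G u ∩ S ∧ u ≠ v := by
    rcases hwc with rfl | hadj
    · -- w = v: take a neighbor of v
      have : 0 < (G.neighborFinset w).card := by
        rw [G.card_neighborFinset_eq_degree]; exact hdeg w
      obtain ⟨u, hu⟩ := Finset.card_pos.mp this
      rw [SimpleGraph.mem_neighborFinset] at hu
      exact ⟨u, ⟨Set.mem_insert_iff.mpr (Or.inr hu.symm), hwS⟩, (G.ne_of_adj hu).symm⟩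
    · -- w ≠ v, w a neighbor of v
      exact ⟨w, ⟨Set.mem_insert _ _, hwS⟩,
        (G.ne_of_adj (hadj : G.Adj v w)).symm⟩
  have hd := le_min_iff.mp (hdist v u hune.symm)
  have hne : ((closedNbhd G v ∩ S) \ (closedNbhd G u ∩ S)).Nonempty := by
    rw [← Set.ncard_pos (Set.toFinite _)]; omega
  obtain ⟨x, hx1, hx2⟩ := hne
  rw [hw, Set.mem_singleton_iff] at hx1
  exact hx2 (hx1 ▸ huS)
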